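/- Let H : ℝ → ℝ be continuously differentiable, c¹, c² : ℝ → ℝ continuous, and A, B : ℝ → ℝ differentiable with A'(t) = -c¹(t) e^{-B(t)} and B'(t) = -c²(t). Suppose U : ℝ × ℝ → ℝ is differentiable and satisfies the implicit relation U(x,t) = e^{-B(t)} H(x - A(t) e^{B(t)} U(x,t)) for all (x,t), and suppose 1 + A(t) H'(x - A(t) e^{B(t)} U(x,t)) ≠ 0 at a point (x₀,t₀). Then at (x₀,t₀), ∂ₜ U = c¹(t₀) U ∂ₓ U + c²(t₀) U. -/

import Mathlib

/-- Implicit-form solution of the non-linear transport equation with dissipation. -/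
theorem stmt_3 (H c1 c2 A B : ℝ → ℝ)
    (hH : ContDiff ℝ 1 H) (hc1 : Continuous c1) (hc2 : Continuous c2)
    (hA : Differentiable ℝ A) (hB : Differentiable ℝ B)
    (hA' : ∀ t, deriv A t = -c1 t * Real.exp (-B t))
    (hB' : ∀ t, deriv B t = -c2 t)
    (U : ℝ → ℝ → ℝ)
    (hU : Differentiable ℝ (fun p : ℝ × ℝ => U p.1 p.2))
    (himp : ∀ x t, U x t = Real.exp (-B t) * H (x - A t * Real.exp (B t) * U x t))
    (x₀ t₀ : ℝ)
    (hnd : 1 + A t₀ * deriv H (x₀ - A t₀ * Real.exp (B t₀) * U x₀ t₀) ≠ 0) :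
    deriv (fun τ => U x₀ τ) t₀ =
      c1 t₀ * U x₀ t₀ * deriv (fun y => U y t₀) x₀ + c2 t₀ * U x₀ t₀ := by
  have hHd : Differentiable ℝ H := hH.differentiable one_ne_zero
  have hf : Differentiable ℝ (fun t => U x₀ t) := by
    have h : (fun t => U x₀ t) = (fun p : ℝ × ℝ => U p.1 p.2) ∘ (fun t => ((x₀ : ℝ), t)) := rfl
    rw [h]; exact hU.comp (by fun_prop)
  have hg : Differentiable ℝ (fun y => U y t₀) := by
    have h : (fun y => U y t₀) = (fun p : ℝ × ℝ => U p.1 p.2) ∘ (fun y => (y, (t₀ : ℝ))) := rfl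
    rw [h]; exact hU.comp (by fun_prop)
  set u := U x₀ t₀ with hu
  set a := A t₀ with ha
  set b := B t₀ with hb
  set φ₀ := x₀ - a * Real.exp b * u with hφ₀
  set D := deriv H φ₀ with hD
  set f' := deriv (fun τ => U x₀ τ) t₀ with hf'
  set g' := deriv (fun y => U y t₀) x₀ with hg'
  have hfD : HasDerivAt (fun τ => U x₀ τ) f' t₀ := (hf t₀).hasDerivAt
  have hgD : HasDerivAt (fun y => U y t₀) g' x₀ := (hg x₀).hasDerivAt
  -- time derivative
  have hBt : HasDerivAt B (-c2 t₀) t₀ := hB' t₀ ▸ (hB t₀).hasDerivAt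
  have hAt : HasDerivAt A (-c1 t₀ * Real.exp (-b)) t₀ := hA' t₀ ▸ (hA t₀).hasDerivAt
  have hE : HasDerivAt (fun t => Real.exp (-B t)) (Real.exp (-b) * -(-c2 t₀)) t₀ := hBt.neg.exp
  have hEb : HasDerivAt (fun t => Real.exp (B t)) (Real.exp b * -c2 t₀) t₀ := hBt.exp
  have hinner : HasDerivAt (fun t => x₀ - A t * Real.exp (B t) * U x₀ t)
      (0 - ((-c1 t₀ * Real.exp (-b) * Real.exp b + a * (Real.exp b * -c2 t₀)) * u
        + a * Real.exp b * f')) t₀ :=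
    (hasDerivAt_const t₀ x₀).sub ((hAt.mul hEb).mul hfD)
  have hH1 : HasDerivAt (fun t => H (x₀ - A t * Real.exp (B t) * U x₀ t))
      (D * (0 - ((-c1 t₀ * Real.exp (-b) * Real.exp b + a * (Real.exp b * -c2 t₀)) * u
        + a * Real.exp b * f'))) t₀ :=
    (hHd φ₀).hasDerivAt.comp t₀ hinner
  have hT := hE.fun_mul hH1
  rw [show (fun t => Real.exp (-B t) * H (x₀ - A t * Real.exp (B t) * U x₀ t))
      = fun τ => U x₀ τ from funext fun t => (himp x₀ t).symm] at hT
  have E1 := hfD.unique hT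
  -- space derivative
  have hinx : HasDerivAt (fun y => y - a * Real.exp b * U y t₀)
      (1 - a * Real.exp b * g') x₀ :=
    (hasDerivAt_id x₀).sub (hgD.const_mul (a * Real.exp b))
  have hH2 : HasDerivAt (fun y => H (y - a * Real.exp b * U y t₀))
      (D * (1 - a * Real.exp b * g')) x₀ :=
    (hHd φ₀).hasDerivAt.comp x₀ hinx
  have hX := hH2.const_mul (Real.exp (-b))
  rw [show (fun y => Real.exp (-b) * H (y - a * Real.exp b * U y t₀))
      = fun y => U y t₀ from funext fun y => (himp y t₀).symm] at hX
  have E2 := hgD.unique hX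
  have himp₀ : u = Real.exp (-b) * H φ₀ := himp x₀ t₀
  have hk : Real.exp (-b) * Real.exp b = 1 := by
    rw [← Real.exp_add]; simp
  rw [← ha, ← hb, ← hu] at E1
  rw [show x₀ - a * Real.exp b * u = φ₀ from hφ₀.symm] at E1
  have E1' : f' * (1 + a * D) = c2 t₀ * u * (1 + a * D) + c1 t₀ * u * (Real.exp (-b) * D) := by
    linear_combination E1 - c2 t₀ * himp₀ + (a * D * c2 t₀ * u + c1 t₀ * u * Real.exp (-b) * D - a * D * f') * hk
  have E2' : g' * (1 + a * D) = Real.exp (-b) * D := by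
    linear_combination E2 - a * D * g' * hk
  refine mul_left_cancel₀ hnd ?_
  linear_combination E1' - c1 t₀ * u * E2'
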